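/- Let c₁, c₂ ∈ ℝ and define β = c₁/3, γ = 1 + (c₂ + 2c₁)/3, δ = (c₁ + c₂ + 1)/3, and χ(π) = β·π² + γ·π + δ. Let γₐ ∈ (1,2). Then χ(0) = 0 and χ′(0) = γₐ hold if and only if c₁ = 3γₐ − 2 and c₂ = 1 − 3γₐ. Moreover, in that case: χ(π) = (γₐ − 2/3)·π² + γₐ·π, c₁ > 1, c₂ < −2, and Δ ≡ c₂² − 4c₁ = 9(γₐ − 1)² > 0. -/
import Mathlib


/-- Propositions 11 and 12: first-order classical ideal gas conditions `χ(0)=0`,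
`χ′(0)=γₐ` on the quadratic indicatrix of an ideal gas Stephani universe hold iff
`c₁ = 3γₐ−2` and `c₂ = 1−3γₐ`; in that case `χ(π) = (γₐ−2/3)π² + γₐπ`, `c₁ > 1`,
`c₂ < −2` and `Δ = 9(γₐ−1)² > 0`. -/
theorem stmt_16
    (c₁ c₂ : ℝ)
    (β γ δ : ℝ)
    (hβ : β = c₁ / 3) (hγ : γ = 1 + (c₂ + 2 * c₁) / 3) (hδ : δ = (c₁ + c₂ + 1) / 3)
    (χ : ℝ → ℝ) (hχdef : ∀ π : ℝ, χ π = β * π^2 + γ * π + δ)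
    (γₐ : ℝ) (hγₐ : γₐ ∈ Set.Ioo (1 : ℝ) 2) :
    ((χ 0 = 0 ∧ deriv χ 0 = γₐ) ↔ (c₁ = 3 * γₐ - 2 ∧ c₂ = 1 - 3 * γₐ)) ∧
    (c₁ = 3 * γₐ - 2 → c₂ = 1 - 3 * γₐ →
      (∀ π : ℝ, χ π = (γₐ - 2/3) * π^2 + γₐ * π) ∧
      1 < c₁ ∧ c₂ < -2 ∧
      c₂^2 - 4 * c₁ = 9 * (γₐ - 1)^2 ∧ 0 < c₂^2 - 4 * c₁) := by
  obtain ⟨h1, h2⟩ := hγₐ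
  have hχ : χ = fun π : ℝ => β * π^2 + γ * π + δ := funext hχdef
  have hd : deriv χ 0 = γ := by
    rw [hχ]
    have : HasDerivAt (fun π : ℝ => β * π^2 + γ * π + δ) (β * (2 * 0) + γ) 0 := by
      have := (((hasDerivAt_id (0:ℝ)).pow 2).const_mul β).add
        (((hasDerivAt_id (0:ℝ)).const_mul γ))
      simpa using this.add_const δ
    simpa using this.deriv
  have h0 : χ 0 = δ := by rw [hχdef]; ring
  constructor
  · rw [h0, hd]
    constructor
    · rintro ⟨ha, hb⟩
      subst hδ hγ
      constructor <;> linarith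
    · rintro ⟨ha, hb⟩
      subst ha hb hδ hγ
      constructor <;> ring
  · rintro ha hb
    subst ha hb hβ hγ hδ
    refine ⟨fun π => by rw [hχdef]; ring, by linarith, by linarith, by ring, by nlinarith⟩
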